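/- Suppose (x̂, 0) ∈ A(λ̂, r̂) for some (λ̂, r̂) ∈ ℝᵐ × (0, ∞). Then: h(x̂) = 0; x̂ is an optimal solution of the primal problem (NLP), i.e. f(x̂) ≤ f(x) for every x with h(x) = 0; (λ̂, r̂) is an optimal dual solution, i.e. q̃(λ, r) ≤ q̃(λ̂, r̂) for every (λ, r) ∈ ℝᵐ × (0, ∞); and there is no duality gap: q̃(λ̂, r̂) = f(x̂). -/

import Mathlib

noncomputable section

open Classical in
/-- The extended-real-valued smoothing function `L̃_{λ,r}(x,t)`. -/
def Ltilde {n m : ℕ} (f : EuclideanSpace ℝ (Fin n) → ℝ)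
    (h : EuclideanSpace ℝ (Fin n) → EuclideanSpace ℝ (Fin m))
    (lam : EuclideanSpace ℝ (Fin m)) (r : ℝ)
    (x : EuclideanSpace ℝ (Fin n)) (t : ℝ) : EReal :=
  if 0 < t then
    (((f x + (inner ℝ lam (h x) : ℝ) + r / (2 * t) * ‖h x‖ ^ 2 + r / 2 * t) : ℝ) : EReal)
  else if t = 0 ∧ h x = 0 then ((f x : ℝ) : EReal)
  else ⊤

/-- The augmented dual function `q̃(λ, r) = inf_{(x,t)} L̃_{λ,r}(x,t)`. -/
def qtilde {n m : ℕ} (f : EuclideanSpace ℝ (Fin n) → ℝ)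
    (h : EuclideanSpace ℝ (Fin n) → EuclideanSpace ℝ (Fin m))
    (lam : EuclideanSpace ℝ (Fin m)) (r : ℝ) : EReal :=
  ⨅ p : EuclideanSpace ℝ (Fin n) × ℝ, Ltilde f h lam r p.1 p.2

/-- The set `A(λ, r)` of global minimizers of `L̃_{λ,r}`. -/
def Aset {n m : ℕ} (f : EuclideanSpace ℝ (Fin n) → ℝ)
    (h : EuclideanSpace ℝ (Fin n) → EuclideanSpace ℝ (Fin m))
    (lam : EuclideanSpace ℝ (Fin m)) (r : ℝ) :
    Set (EuclideanSpace ℝ (Fin n) × ℝ) :=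
  {p | Ltilde f h lam r p.1 p.2 = qtilde f h lam r}

/-- if `(x̂, 0) ∈ A(λ̂, r̂)`, then `h x̂ = 0`, `x̂` is an optimal primal solution,
`(λ̂, r̂)` is an optimal dual solution, and there is no duality gap: `q̃(λ̂, r̂) = f x̂`. -/
theorem stmt4 {n m : ℕ} (f : EuclideanSpace ℝ (Fin n) → ℝ)
    (h : EuclideanSpace ℝ (Fin n) → EuclideanSpace ℝ (Fin m))
    (hf : ContDiff ℝ 2 f) (hh : ContDiff ℝ 2 h)
    (lamh : EuclideanSpace ℝ (Fin m)) (rh : ℝ) (hrh : 0 < rh)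
    (xh : EuclideanSpace ℝ (Fin n))
    (hmem : (xh, (0 : ℝ)) ∈ Aset f h lamh rh) :
    h xh = 0 ∧
    (∀ x : EuclideanSpace ℝ (Fin n), h x = 0 → f xh ≤ f x) ∧
    (∀ (lam : EuclideanSpace ℝ (Fin m)) (r : ℝ), 0 < r →
      qtilde f h lam r ≤ qtilde f h lamh rh) ∧
    qtilde f h lamh rh = ((f xh : ℝ) : EReal) := by
  -- First show h xh = 0
  have hmem' : Ltilde f h lamh rh xh 0 = qtilde f h lamh rh := hmem
  have hle1 : qtilde f h lamh rh ≤ Ltilde f h lamh rh xh 1 :=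
    iInf_le (fun p : EuclideanSpace ℝ (Fin n) × ℝ => Ltilde f h lamh rh p.1 p.2) (xh, 1)
  have hL1 : Ltilde f h lamh rh xh 1 ≠ ⊤ := by
    simp only [Ltilde, if_pos (by norm_num : (0:ℝ) < 1)]
    exact EReal.coe_ne_top _
  have hqne : qtilde f h lamh rh ≠ ⊤ := fun ht => hL1 (top_le_iff.mp (ht ▸ hle1))
  have hx0 : h xh = 0 := by
    by_contra hne
    apply hqne
    rw [← hmem']
    simp [Ltilde, hne]
  have hgap : qtilde f h lamh rh = ((f xh : ℝ) : EReal) := by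
    rw [← hmem']
    simp [Ltilde, hx0]
  refine ⟨hx0, ?_, ?_, hgap⟩
  · intro x hx
    have : qtilde f h lamh rh ≤ Ltilde f h lamh rh x 0 :=
      iInf_le (fun p : EuclideanSpace ℝ (Fin n) × ℝ => Ltilde f h lamh rh p.1 p.2) (x, 0)
    rw [hgap] at this
    have h2 : Ltilde f h lamh rh x 0 = ((f x : ℝ) : EReal) := by simp [Ltilde, hx]
    rw [h2] at this
    exact_mod_cast this
  · intro lam r hr
    rw [hgap]
    rw [← EReal.le_of_forall_lt_iff_le]
    intro z hz
    have hz' : f xh < z := by exact_mod_cast hz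
    set t : ℝ := min 1 ((z - f xh) / r) with ht
    have ht0 : 0 < t := lt_min one_pos (div_pos (by linarith) hr)
    have hle : qtilde f h lam r ≤ Ltilde f h lam r xh t :=
      iInf_le (fun p : EuclideanSpace ℝ (Fin n) × ℝ => Ltilde f h lam r p.1 p.2) (xh, t)
    have hLval : Ltilde f h lam r xh t = ((f xh + r / 2 * t : ℝ) : EReal) := by
      simp [Ltilde, if_pos ht0, hx0]
    refine hle.trans ?_
    rw [hLval]
    have htle : t ≤ (z - f xh) / r := min_le_right _ _
    have : r / 2 * t ≤ z - f xh := by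
      have h1 : r * t ≤ z - f xh := by
        have h3 := mul_le_mul_of_nonneg_left htle hr.le
        rwa [mul_div_cancel₀ _ hr.ne'] at h3
      nlinarith
    exact_mod_cast (by linarith : f xh + r / 2 * t ≤ z)
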